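/- arXiv:2205.07710 — 4 statements merged into one kernel-verified Lean document; each statement's English description precedes it below -/
import Mathlib

section
/- Let M_n be the n×n real tridiagonal matrix with diagonal entries (1, 2, 2, ..., 2) and sub- /super-diagonal entries all equal to -1. Then the least eigenvalue of M_n is 4 sin²(π/(4n+2)). -/
/-- The `n × n` tridiagonal matrix with diagonal `(1, 2, 2, ..., 2)` and
off-diagonal entries `-1`. -/
def M (n : ℕ) : Matrix (Fin n) (Fin n) ℝ :=
  Matrix.of fun i j =>
    if i = j then (if (i : ℕ) = 0 then 1 else 2)
    else if (i : ℕ) + 1 = (j : ℕ) ∨ (j : ℕ) + 1 = (i : ℕ) then -1 else 0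

noncomputable def T (n : ℕ) : ℝ := Real.pi / (4 * n + 2)
noncomputable def lam (n : ℕ) : ℝ := 4 * Real.sin (T n) ^ 2
noncomputable def w (n j : ℕ) : ℝ := Real.cos ((2 * j + 1) * T n)

lemma T_pos (n : ℕ) : 0 < T n := div_pos Real.pi_pos (by positivity)

lemma two_sub_lam (n : ℕ) : 2 - lam n = 2 * Real.cos (2 * T n) := by
  have h := Real.cos_two_mul' (T n)
  have h2 := Real.sin_sq_add_cos_sq (T n)
  unfold lam; nlinarith

lemma w_one (n : ℕ) : w n 1 = (1 - lam n) * w n 0 := by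
  unfold w lam
  have h3 : (2 * (1:ℕ) + 1 : ℝ) * T n = 3 * T n := by push_cast; ring
  have h0 : (2 * (0:ℕ) + 1 : ℝ) * T n = T n := by push_cast; ring
  rw [h3, h0, Real.cos_three_mul]
  have h2 := Real.sin_sq_add_cos_sq (T n)
  linear_combination (4 * Real.cos (T n)) * h2

lemma w_rec (n j : ℕ) : w n j + w n (j + 2) = (2 - lam n) * w n (j + 1) := by
  rw [two_sub_lam]
  unfold w
  have h1 : (2 * ((j:ℝ)) + 1) * T n = (2 * ((j:ℝ) + 1) + 1) * T n - 2 * T n := by ring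
  have h2 : (2 * ((j:ℝ) + 2) + 1) * T n = (2 * ((j:ℝ) + 1) + 1) * T n + 2 * T n := by ring
  push_cast
  rw [h1, h2, Real.cos_sub, Real.cos_add]
  ring

lemma halfpi (n : ℕ) : (2 * (n:ℝ) + 1) * T n = Real.pi / 2 := by
  unfold T
  have : (4 * (n:ℝ) + 2) ≠ 0 := by positivity
  field_simp
  ring

lemma w_last (n : ℕ) : w n n = 0 := by
  unfold w
  rw [show (2 * (n:ℝ) + 1) * T n = Real.pi / 2 from halfpi n, Real.cos_pi_div_two]

lemma w_pos (n j : ℕ) (hj : j < n) : 0 < w n j := by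
  unfold w
  apply Real.cos_pos_of_mem_Ioo
  constructor
  · have := T_pos n
    have : (0:ℝ) < (2 * j + 1) * T n := by positivity
    linarith [Real.pi_pos]
  · rw [← halfpi n]
    apply mul_lt_mul_of_pos_right _ (T_pos n)
    have : (j:ℝ) < n := by exact_mod_cast hj
    linarith

open Finset in
lemma mulVec_M (n : ℕ) (x : ℕ → ℝ) (hx : ∀ j, n ≤ j → x j = 0) (i : Fin n) :
    (M n).mulVec (fun j => x j) i
      = (if (i:ℕ) = 0 then 1 else 2) * x i - x ((i:ℕ)+1)
        - (if (i:ℕ) = 0 then 0 else x ((i:ℕ)-1)) := by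
  have key : ∀ j : Fin n, M n i j * x j =
      (fun k : ℕ => (if k = (i:ℕ) then (if (i:ℕ) = 0 then 1 else 2) * x k else 0)
        + (if k = (i:ℕ)+1 then -x k else 0)
        + (if k + 1 = (i:ℕ) then -x k else 0)) (j : ℕ) := by
    intro j
    simp only [M, Matrix.of_apply, Fin.ext_iff]
    split_ifs
    all_goals try (exfalso; omega)
    all_goals ring
  rw [Matrix.mulVec, dotProduct]
  calc ∑ j : Fin n, M n i j * x j
      = ∑ k ∈ range n, ((if k = (i:ℕ) then (if (i:ℕ) = 0 then 1 else 2) * x k else 0)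
        + (if k = (i:ℕ)+1 then -x k else 0)
        + (if k + 1 = (i:ℕ) then -x k else 0)) := by
        rw [← Fin.sum_univ_eq_sum_range]
        exact Finset.sum_congr rfl fun j _ => key j
    _ = _ := by
        rw [Finset.sum_add_distrib, Finset.sum_add_distrib]
        rw [Finset.sum_ite_eq' (range n) ((i:ℕ)) (fun k => (if (i:ℕ) = 0 then 1 else 2) * x k)]
        rw [Finset.sum_ite_eq' (range n) ((i:ℕ)+1) (fun k => -x k)]
        rw [if_pos (mem_range.mpr i.isLt)]
        have h2 : (if (i:ℕ)+1 ∈ range n then -x ((i:ℕ)+1) else 0) = -x ((i:ℕ)+1) := by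
          split_ifs with h
          · rfl
          · rw [hx _ (by simpa using h)]; ring
        rw [h2]
        have h3 : ∑ k ∈ range n, (if k + 1 = (i:ℕ) then -x k else 0)
            = (if (i:ℕ) = 0 then 0 else -x ((i:ℕ)-1)) := by
          rcases eq_or_ne ((i:ℕ)) 0 with h | h
          · rw [if_pos h]
            apply Finset.sum_eq_zero
            intro k _
            rw [if_neg (by omega)]
          · rw [if_neg h]
            calc ∑ k ∈ range n, (if k + 1 = (i:ℕ) then -x k else 0)
                = ∑ k ∈ range n, (if k = (i:ℕ)-1 then -x k else 0) :=
                  Finset.sum_congr rfl fun k _ => by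
                    split_ifs
                    all_goals try (exfalso; omega)
                    all_goals rfl
              _ = _ := by
                  rw [Finset.sum_ite_eq' (range n) ((i:ℕ)-1) (fun k => -x k)]
                  rw [if_pos (mem_range.mpr (by omega))]
        rw [h3]
        split_ifs <;> ring

open Finset in
lemma ident (n : ℕ) (x : ℕ → ℝ) : ∀ k, k < n →
    ∑ i ∈ range (k+1), (if i = 0 then 1 else 2) * x i ^ 2 - 2 * ∑ i ∈ range k, x i * x (i+1)
    = lam n * ∑ i ∈ range (k+1), x i ^ 2
      + ∑ i ∈ range k, (w n (i+1) * x i - w n i * x (i+1))^2 / (w n i * w n (i+1))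
      + (w n (k+1) / w n k) * x k ^ 2 := by
  intro k
  induction k with
  | zero =>
      intro hk
      have hw0 : 0 < w n 0 := w_pos n 0 hk
      simp only [zero_add, sum_range_one, range_one, range_zero, sum_empty, sum_singleton, if_pos rfl, if_true]
      rw [w_one n]
      field_simp
      ring
  | succ k ih =>
      intro hk
      have hk' : k < n := by omega
      have h1 := ih hk'
      rw [sum_range_succ (fun i => (if i = 0 then 1 else 2) * x i ^2) (k+1),
          sum_range_succ (fun i => x i * x (i+1)) k,
          sum_range_succ (fun i => x i ^2) (k+1),
          sum_range_succ (fun i => (w n (i+1) * x i - w n i * x (i+1))^2/(w n i * w n (i+1))) k]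
      have hw1 : 0 < w n k := w_pos n k hk'
      have hw2 : 0 < w n (k+1) := w_pos n (k+1) hk
      have hrec := w_rec n k
      have hd : (if k+1 = 0 then (1:ℝ) else 2) = 2 := by norm_num
      rw [hd]
      have hsub : w n (k+2) = (2 - lam n) * w n (k+1) - w n k := by linarith
      have key : (w n (k+1)/w n k) * x k^2 + 2 * x (k+1)^2 - 2 * (x k * x (k+1))
          = lam n * x (k+1)^2
            + (w n (k+1) * x k - w n k * x (k+1))^2 / (w n k * w n (k+1))
            + (w n (k+2) / w n (k+1)) * x (k+1)^2 := by
        rw [hsub]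
        field_simp
        ring
      linear_combination h1 + key

open Finset in
lemma quad_lower (n : ℕ) (hn : 0 < n) (x : ℕ → ℝ) (hx : ∀ j, n ≤ j → x j = 0) :
    lam n * ∑ i ∈ range n, x i ^ 2
      ≤ ∑ i ∈ range n, x i * ((if i = 0 then 1 else 2) * x i - x (i+1)
          - (if i = 0 then 0 else x (i-1))) := by
  obtain ⟨m, rfl⟩ : ∃ m, n = m + 1 := ⟨n - 1, by omega⟩
  have hP : ∑ i ∈ range (m+1), x i * ((if i = 0 then 1 else 2) * x i - x (i+1)
          - (if i = 0 then 0 else x (i-1)))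
      = ∑ i ∈ range (m+1), (if i = 0 then 1 else 2) * x i ^ 2
        - 2 * ∑ i ∈ range m, x i * x (i+1) := by
    have e1 : ∀ i ∈ range (m+1), x i * ((if i = 0 then 1 else 2) * x i - x (i+1)
          - (if i = 0 then 0 else x (i-1)))
        = (if i = 0 then 1 else 2) * x i ^ 2 - x i * x (i+1)
          - (if i = 0 then 0 else x i * x (i-1)) := by
      intro i _
      split_ifs <;> ring
    rw [Finset.sum_congr rfl e1, Finset.sum_sub_distrib, Finset.sum_sub_distrib]
    have e2 : ∑ i ∈ range (m+1), x i * x (i+1) = ∑ i ∈ range m, x i * x (i+1) := by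
      rw [sum_range_succ, hx (m+1) (le_refl _), mul_zero, add_zero]
    have e3 : ∑ i ∈ range (m+1), (if i = 0 then 0 else x i * x (i-1))
        = ∑ i ∈ range m, x i * x (i+1) := by
      have hterm : ∀ i ∈ range m, (if i + 1 = 0 then (0:ℝ) else x (i+1) * x (i+1-1))
          = x i * x (i+1) := by
        intro i _
        rw [if_neg (Nat.succ_ne_zero i), Nat.add_sub_cancel]
        ring
      rw [Finset.sum_range_succ' (fun i => if i = 0 then (0:ℝ) else x i * x (i-1)) m]
      rw [Finset.sum_congr rfl hterm, if_pos rfl, add_zero]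
    rw [e2, e3]
    ring
  rw [hP]
  have h := ident (m+1) x m (by omega)
  rw [h]
  have h0 : (w (m+1) (m+1) / w (m+1) m) * x m ^ 2 = 0 := by
    rw [w_last (m+1)]
    simp
  rw [h0, add_zero]
  have hnn : 0 ≤ ∑ i ∈ range m, (w (m+1) (i+1) * x i - w (m+1) i * x (i+1))^2
      / (w (m+1) i * w (m+1) (i+1)) := by
    apply Finset.sum_nonneg
    intro i hi
    have hi' := mem_range.mp hi
    apply div_nonneg (sq_nonneg _)
    exact (mul_pos (w_pos (m+1) i (by omega)) (w_pos (m+1) (i+1) (by omega))).le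
  linarith

open Finset

theorem stmt4 (n : ℕ) (hn : 0 < n) :
    IsLeast (spectrum ℝ (M n)) (4 * Real.sin (Real.pi / (4 * n + 2)) ^ 2) := by
  have hlam : (4 * Real.sin (Real.pi / (4 * n + 2)) ^ 2) = lam n := rfl
  rw [hlam]
  constructor
  · -- membership
    set x : ℕ → ℝ := fun k => if k < n then w n k else 0 with hxdef
    have hx : ∀ j, n ≤ j → x j = 0 := fun j hj => if_neg (by omega)
    have hvx : (fun j : Fin n => x j) = (fun j : Fin n => w n j) := by
      funext j
      exact if_pos j.isLt
    have hxw : ∀ k, k ≤ n → x k = w n k := by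
      intro k hk
      rcases lt_or_eq_of_le hk with h | h
      · exact if_pos h
      · rw [h, w_last n]
        simp [hxdef]
    have hv : (M n).mulVec (fun j : Fin n => w n j) = lam n • (fun j : Fin n => w n j) := by
      funext i
      rw [← hvx, mulVec_M n x hx i]
      simp only [Pi.smul_apply, smul_eq_mul]
      have e0 : x (i:ℕ) = w n i := hxw _ i.isLt.le
      have e1 : x ((i:ℕ)+1) = w n ((i:ℕ)+1) := hxw _ i.isLt
      rw [e0, e1]
      rcases eq_or_ne ((i:ℕ)) 0 with h | h
      · rw [if_pos h, if_pos h, h, sub_zero, Nat.zero_add, w_one n]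
        ring
      · rw [if_neg h, if_neg h]
        have e2 : x ((i:ℕ)-1) = w n ((i:ℕ)-1) := hxw _ (by omega)
        rw [e2]
        have hr := w_rec n ((i:ℕ)-1)
        rw [show (i:ℕ)-1+2 = (i:ℕ)+1 from by omega, show (i:ℕ)-1+1 = (i:ℕ) from by omega] at hr
        linear_combination -hr
    rw [spectrum.mem_iff]
    intro hU
    have hv0 : (fun j : Fin n => w n j) ≠ 0 := by
      intro h0
      have := congrFun h0 ⟨0, hn⟩
      simp only [Pi.zero_apply] at this
      exact absurd this (ne_of_gt (w_pos n 0 hn))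
    have hker : (algebraMap ℝ (Matrix (Fin n) (Fin n) ℝ) (lam n) - M n).mulVec
        (fun j : Fin n => w n j) = 0 := by
      rw [Matrix.sub_mulVec, Algebra.algebraMap_eq_smul_one, Matrix.smul_mulVec,
        Matrix.one_mulVec, hv, sub_self]
    have hdet : (algebraMap ℝ (Matrix (Fin n) (Fin n) ℝ) (lam n) - M n).det = 0 :=
      Matrix.exists_mulVec_eq_zero_iff.mp ⟨_, hv0, hker⟩
    exact isUnit_iff_ne_zero.mp ((Matrix.isUnit_iff_isUnit_det _).mp hU) hdet
  · -- lower bound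
    intro μ hμ
    rw [spectrum.mem_iff] at hμ
    have hdet : (algebraMap ℝ (Matrix (Fin n) (Fin n) ℝ) μ - M n).det = 0 := by
      by_contra h
      exact hμ ((Matrix.isUnit_iff_isUnit_det _).mpr (isUnit_iff_ne_zero.mpr h))
    obtain ⟨v, hv0, hker⟩ := Matrix.exists_mulVec_eq_zero_iff.mpr hdet
    have hMv : (M n).mulVec v = μ • v := by
      rw [Matrix.sub_mulVec, Algebra.algebraMap_eq_smul_one, Matrix.smul_mulVec,
        Matrix.one_mulVec, sub_eq_zero] at hker
      exact hker.symm
    set x : ℕ → ℝ := fun k => if h : k < n then v ⟨k, h⟩ else 0 with hxdef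
    have hvx : (fun j : Fin n => x j) = v := funext fun j => dif_pos j.isLt
    have hx : ∀ j, n ≤ j → x j = 0 := fun j hj => dif_neg (by omega)
    have S1 : ∑ i : Fin n, x (i:ℕ) * (M n).mulVec v i = μ * ∑ i ∈ range n, x i ^ 2 := by
      rw [hMv, ← Fin.sum_univ_eq_sum_range (fun i => x i ^ 2) n, Finset.mul_sum]
      apply Finset.sum_congr rfl
      intro i _
      have : v i = x (i:ℕ) := (congrFun hvx i).symm
      simp only [Pi.smul_apply, smul_eq_mul, this]
      ring
    have S2 : ∑ i : Fin n, x (i:ℕ) * (M n).mulVec v i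
        = ∑ i ∈ range n, x i * ((if i = 0 then 1 else 2) * x i - x (i+1)
            - (if i = 0 then 0 else x (i-1))) := by
      rw [← Fin.sum_univ_eq_sum_range (fun i => x i * ((if i = 0 then 1 else 2) * x i - x (i+1)
            - (if i = 0 then 0 else x (i-1)))) n]
      apply Finset.sum_congr rfl
      intro i _
      rw [← hvx, mulVec_M n x hx i]
    have hquad := quad_lower n hn x hx
    have hpos : 0 < ∑ i ∈ range n, x i ^ 2 := by
      obtain ⟨j, hj⟩ := Function.ne_iff.mp hv0
      have hxj : x (j:ℕ) ≠ 0 := by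
        rw [hxdef]
        simpa [dif_pos j.isLt] using hj
      apply Finset.sum_pos' (fun i _ => sq_nonneg _)
      exact ⟨(j:ℕ), mem_range.mpr j.isLt, by positivity⟩
    rw [S2] at S1
    nlinarith [hquad, hpos, S1]
end

section
/- Let G be a bipartite graph with m edges. Then the spectral radius of G satisfies ρ(G) ≤ √m. -/
open Matrix

theorem stmt6 {V : Type*} [Fintype V] [DecidableEq V] (G : SimpleGraph V)
    [DecidableRel G.Adj] (hbip : G.Colorable 2) (ρ : ℝ)
    (hρ : IsGreatest (spectrum ℝ (G.adjMatrix ℝ)) ρ) :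
    ρ ≤ Real.sqrt (G.edgeFinset.card : ℝ) := by
  classical
  obtain ⟨hmem, -⟩ := hρ
  -- obtain an eigenvector
  have hev : Module.End.HasEigenvalue (Matrix.toLin' (G.adjMatrix ℝ)) ρ := by
    rw [Module.End.hasEigenvalue_iff_mem_spectrum]
    have heq : (Matrix.toLin' (G.adjMatrix ℝ)) = Matrix.toLinAlgEquiv' (G.adjMatrix ℝ) := rfl
    rw [heq, AlgEquiv.spectrum_eq]
    exact hmem
  obtain ⟨v, hv⟩ := hev.exists_hasEigenvector
  have hveq : G.adjMatrix ℝ *ᵥ v = ρ • v := by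
    have h := hv.apply_eq_smul
    rwa [Matrix.toLin'_apply] at h
  have hv0 : v ≠ 0 := hv.right
  obtain ⟨i1, hi1⟩ : ∃ i, v i ≠ 0 := Function.ne_iff.mp hv0
  have hVne : (Finset.univ : Finset V).Nonempty := ⟨i1, Finset.mem_univ _⟩
  obtain ⟨i0, -, hmax⟩ := Finset.exists_max_image Finset.univ (fun i => |v i|) hVne
  have hpos : 0 < |v i0| := lt_of_lt_of_le (abs_pos.mpr hi1) (hmax i1 (Finset.mem_univ _))
  rcases le_or_gt ρ 0 with hρ0 | hρpos
  · exact hρ0.trans (Real.sqrt_nonneg _)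
  obtain ⟨C⟩ := hbip
  set c0 := C i0 with hc0
  have fin2 : ∀ p q r : Fin 2, p ≠ r → q ≠ r → p = q := by decide
  -- sum of degrees over the opposite color class equals the number of edges
  have hdegsum : ∑ j ∈ Finset.univ.filter (fun j => C j ≠ c0), G.degree j
      = G.edgeFinset.card := by
    have step1 : (Finset.univ.filter (fun p : V × V => G.Adj p.1 p.2 ∧ C p.1 ≠ c0)).card
        = ∑ j ∈ Finset.univ.filter (fun j => C j ≠ c0), G.degree j := by
      rw [Finset.card_filter, Fintype.sum_prod_type, Finset.sum_filter]
      refine Finset.sum_congr rfl fun j _ => ?_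
      by_cases h : C j = c0
      · simp [h]
      · simp only [h, not_false_iff, if_true]
        rw [SimpleGraph.degree, SimpleGraph.neighborFinset_eq_filter, Finset.card_filter]
        simp [h]
    rw [← step1]
    apply Finset.card_bij (fun p _ => Sym2.mk p.1 p.2)
    · rintro ⟨a, b⟩ hp
      simp only [Finset.mem_filter, Finset.mem_univ, true_and] at hp
      rw [SimpleGraph.mem_edgeFinset, SimpleGraph.mem_edgeSet]
      exact hp.1
    · rintro ⟨a, b⟩ hp ⟨x, y⟩ hq h
      simp only [Finset.mem_filter, Finset.mem_univ, true_and] at hp hq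
      rw [Sym2.eq_iff] at h
      rcases h with ⟨rfl, rfl⟩ | ⟨rfl, rfl⟩
      · rfl
      · exact absurd (fin2 _ _ _ hp.2 hq.2) (C.valid hp.1)
    · intro e he
      induction e using Sym2.ind with
      | _ a b =>
        rw [SimpleGraph.mem_edgeFinset, SimpleGraph.mem_edgeSet] at he
        by_cases h : C a = c0
        · refine ⟨(b, a), ?_, Sym2.eq_swap⟩
          simp only [Finset.mem_filter, Finset.mem_univ, true_and]
          exact ⟨he.symm, fun hb => C.valid he (h.trans hb.symm)⟩
        · exact ⟨(a, b), by simp [Finset.mem_filter, he, h], rfl⟩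
  have hsub : G.neighborFinset i0 ⊆ Finset.univ.filter (fun j => C j ≠ c0) := by
    intro j hj
    rw [SimpleGraph.mem_neighborFinset] at hj
    simp only [Finset.mem_filter, Finset.mem_univ, true_and]
    exact fun h => C.valid hj (by rw [h, hc0])
  have hdle : ∑ j ∈ G.neighborFinset i0, G.degree j ≤ G.edgeFinset.card :=
    hdegsum ▸ Finset.sum_le_sum_of_subset hsub
  -- the main estimate
  have key : ρ ^ 2 * |v i0| ≤ (G.edgeFinset.card : ℝ) * |v i0| := by
    have e1 : (G.adjMatrix ℝ *ᵥ (G.adjMatrix ℝ *ᵥ v)) i0 = ρ ^ 2 * v i0 := by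
      rw [hveq, Matrix.mulVec_smul, hveq]
      simp [Pi.smul_apply, smul_eq_mul]
      ring
    calc ρ ^ 2 * |v i0| = |ρ ^ 2 * v i0| := by
          rw [abs_mul, abs_of_nonneg (sq_nonneg ρ)]
      _ = |(G.adjMatrix ℝ *ᵥ (G.adjMatrix ℝ *ᵥ v)) i0| := by rw [e1]
      _ = |∑ j ∈ G.neighborFinset i0, (G.adjMatrix ℝ *ᵥ v) j| := by
          rw [SimpleGraph.adjMatrix_mulVec_apply]
      _ ≤ ∑ j ∈ G.neighborFinset i0, |(G.adjMatrix ℝ *ᵥ v) j| :=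
          Finset.abs_sum_le_sum_abs _ _
      _ ≤ ∑ j ∈ G.neighborFinset i0, ∑ k ∈ G.neighborFinset j, |v k| := by
          refine Finset.sum_le_sum fun j _ => ?_
          rw [SimpleGraph.adjMatrix_mulVec_apply]
          exact Finset.abs_sum_le_sum_abs _ _
      _ ≤ ∑ j ∈ G.neighborFinset i0, ∑ k ∈ G.neighborFinset j, |v i0| := by
          refine Finset.sum_le_sum fun j _ => Finset.sum_le_sum fun k _ => ?_
          exact hmax k (Finset.mem_univ _)
      _ = (∑ j ∈ G.neighborFinset i0, (G.degree j : ℝ)) * |v i0| := by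
          rw [Finset.sum_mul]
          refine Finset.sum_congr rfl fun j _ => ?_
          rw [Finset.sum_const, SimpleGraph.card_neighborFinset_eq_degree, nsmul_eq_mul]
      _ ≤ (G.edgeFinset.card : ℝ) * |v i0| := by
          refine mul_le_mul_of_nonneg_right ?_ (abs_nonneg _)
          rw [← Nat.cast_sum]
          exact_mod_cast hdle
  have hsq : ρ ^ 2 ≤ (G.edgeFinset.card : ℝ) := le_of_mul_le_mul_right key hpos
  exact (Real.le_sqrt' hρpos).mpr hsq
end

section
/- Let G be a connected graph, x its principal (Perron) eigenvector, and u, v two vertices with x(v) ≥ x(u). Let S ⊆ N(u) \ N(v) with v ∉ S and S nonempty. Then the graph G' obtained by deleting the edges {wu : w ∈ S} and adding the edges {wv : w ∈ S} satisfies ρ(G') > ρ(G). -/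
open Matrix

lemma psd_aux {n : Type*} [Fintype n] [DecidableEq n] {A : Matrix n n ℝ}
    (hA : A.IsHermitian) {ρ : ℝ} (hρ : IsGreatest (spectrum ℝ A) ρ) :
    (algebraMap ℝ (Matrix n n ℝ) ρ - A).PosSemidef := by
  have hB : (algebraMap ℝ (Matrix n n ℝ) ρ - A).IsHermitian := by
    simp only [Matrix.IsHermitian, Matrix.conjTranspose_sub, hA.eq]
    congr 1
    simp [Algebra.algebraMap_eq_smul_one]
  refine hB.posSemidef_iff_eigenvalues_nonneg.mpr fun i => show 0 ≤ hB.eigenvalues i from ?_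
  have hmem := hB.eigenvalues_mem_spectrum_real i
  rw [← spectrum.singleton_sub_eq] at hmem
  obtain ⟨a, ha, b, hb, hab⟩ := Set.mem_sub.mp hmem
  rw [Set.mem_singleton_iff] at ha
  have := hρ.2 hb
  subst ha
  linarith [hab ▸ sub_nonneg.mpr this]

lemma rayleigh_le {n : Type*} [Fintype n] [DecidableEq n] {A : Matrix n n ℝ}
    (hA : A.IsHermitian) {ρ : ℝ} (hρ : IsGreatest (spectrum ℝ A) ρ) (y : n → ℝ) :
    y ⬝ᵥ A *ᵥ y ≤ ρ * (y ⬝ᵥ y) := by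
  have h := (psd_aux hA hρ).dotProduct_mulVec_nonneg y
  have hs : star y = y := by funext i; simp
  rw [hs, sub_mulVec, dotProduct_sub] at h
  have : (algebraMap ℝ (Matrix n n ℝ) ρ) *ᵥ y = ρ • y := by
    rw [Algebra.algebraMap_eq_smul_one, smul_mulVec, one_mulVec]
  rw [this, dotProduct_smul] at h
  have : (ρ • (y ⬝ᵥ y) : ℝ) = ρ * (y ⬝ᵥ y) := rfl
  linarith [h]

lemma rayleigh_eq {n : Type*} [Fintype n] [DecidableEq n] {A : Matrix n n ℝ}
    (hA : A.IsHermitian) {ρ : ℝ} (hρ : IsGreatest (spectrum ℝ A) ρ) (y : n → ℝ)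
    (heq : y ⬝ᵥ A *ᵥ y = ρ * (y ⬝ᵥ y)) : A *ᵥ y = ρ • y := by
  have hs : star y = y := by funext i; simp
  have hmv : (algebraMap ℝ (Matrix n n ℝ) ρ) *ᵥ y = ρ • y := by
    rw [Algebra.algebraMap_eq_smul_one, smul_mulVec, one_mulVec]
  have h0 : star y ⬝ᵥ (algebraMap ℝ (Matrix n n ℝ) ρ - A) *ᵥ y = 0 := by
    rw [hs, sub_mulVec, dotProduct_sub, hmv, dotProduct_smul, heq]
    simp [smul_eq_mul]
  have := ((psd_aux hA hρ).dotProduct_mulVec_zero_iff y).mp h0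
  rw [sub_mulVec, hmv, sub_eq_zero] at this
  exact this.symm

theorem stmt11 {V : Type*} [Fintype V] [DecidableEq V]
    (G G' : SimpleGraph V) [DecidableRel G.Adj] [DecidableRel G'.Adj]
    (hconn : G.Connected) (u v : V) (S : Finset V) (hSne : S.Nonempty)
    (hS : ∀ w ∈ S, G.Adj u w ∧ ¬ G.Adj v w) (hvS : v ∉ S)
    (x : V → ℝ) (hpos : ∀ w, 0 < x w) (hunit : ∑ w, x w ^ 2 = 1)
    (ρ : ℝ) (hρ : IsGreatest (spectrum ℝ (G.adjMatrix ℝ)) ρ)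
    (heig : (G.adjMatrix ℝ).mulVec x = ρ • x)
    (hxuv : x u ≤ x v)
    (hG' : ∀ a b, G'.Adj a b ↔
      ((G.Adj a b ∧ ¬ ((a = u ∧ b ∈ S) ∨ (b = u ∧ a ∈ S))) ∨
        (a = v ∧ b ∈ S) ∨ (b = v ∧ a ∈ S)))
    (ρ' : ℝ) (hρ' : IsGreatest (spectrum ℝ (G'.adjMatrix ℝ)) ρ') :
    ρ < ρ' := by
  have hA : (G.adjMatrix ℝ).IsHermitian := by simp [Matrix.IsHermitian]
  have hA' : (G'.adjMatrix ℝ).IsHermitian := by simp [Matrix.IsHermitian]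
  -- basic facts
  have huv : u ≠ v := by
    obtain ⟨w, hw⟩ := hSne
    intro h
    exact (hS w hw).2 (h ▸ (hS w hw).1)
  have huS : u ∉ S := fun h => G.irrefl (hS u h).1
  have hxx : x ⬝ᵥ x = 1 := by
    simpa [dotProduct, sq] using hunit
  have hρx : x ⬝ᵥ (G.adjMatrix ℝ) *ᵥ x = ρ := by
    rw [heig, dotProduct_smul, smul_eq_mul, hxx, mul_one]
  set σS : ℝ := ∑ w ∈ S, x w with hσdef
  have hσpos : 0 < σS := Finset.sum_pos (fun w _ => hpos w) hSne
  -- pointwise difference identity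
  have point : ∀ a b, x a * ((G'.adjMatrix ℝ) a b * x b) = x a * ((G.adjMatrix ℝ) a b * x b) +
      ((if a = v ∧ b ∈ S then x a * x b else 0) + (if b = v ∧ a ∈ S then x a * x b else 0)
        - (if a = u ∧ b ∈ S then x a * x b else 0) - (if b = u ∧ a ∈ S then x a * x b else 0)) := by
    intro a b
    by_cases hc1 : a = v ∧ b ∈ S
    · have hnadj : ¬ G.Adj a b := fun h => (hS b hc1.2).2 (hc1.1 ▸ h)
      have hadj' : G'.Adj a b := (hG' a b).2 (Or.inr (Or.inl hc1))
      have h2 : ¬ (b = v ∧ a ∈ S) := fun h => hvS (h.1 ▸ hc1.2)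
      have h3 : ¬ (a = u ∧ b ∈ S) := fun h => huv (h.1.symm.trans hc1.1)
      have h4 : ¬ (b = u ∧ a ∈ S) := fun h => huS (h.1 ▸ hc1.2)
      simp only [SimpleGraph.adjMatrix_apply, if_pos hadj', if_neg hnadj, if_pos hc1,
        if_neg h2, if_neg h3, if_neg h4]
      ring
    · by_cases hc2 : b = v ∧ a ∈ S
      · have hnadj : ¬ G.Adj a b := fun h => (hS a hc2.2).2 (hc2.1 ▸ h.symm)
        have hadj' : G'.Adj a b := (hG' a b).2 (Or.inr (Or.inr hc2))
        have h3 : ¬ (a = u ∧ b ∈ S) := fun h => hvS (hc2.1 ▸ h.2)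
        have h4 : ¬ (b = u ∧ a ∈ S) := fun h => huv (h.1.symm.trans hc2.1)
        simp only [SimpleGraph.adjMatrix_apply, if_pos hadj', if_neg hnadj, if_neg hc1,
          if_pos hc2, if_neg h3, if_neg h4]
        ring
      · by_cases hc3 : a = u ∧ b ∈ S
        · have hadj : G.Adj a b := hc3.1 ▸ (hS b hc3.2).1
          have hnadj' : ¬ G'.Adj a b := by
            rw [hG']
            rintro (⟨_, hn⟩ | h | h)
            · exact hn (Or.inl hc3)
            · exact hc1 h
            · exact hc2 h
          have h4 : ¬ (b = u ∧ a ∈ S) := fun h => huS (hc3.1 ▸ h.2)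
          simp only [SimpleGraph.adjMatrix_apply, if_neg hnadj', if_pos hadj, if_neg hc1,
            if_neg hc2, if_pos hc3, if_neg h4]
          ring
        · by_cases hc4 : b = u ∧ a ∈ S
          · have hadj : G.Adj a b := hc4.1 ▸ (hS a hc4.2).1.symm
            have hnadj' : ¬ G'.Adj a b := by
              rw [hG']
              rintro (⟨_, hn⟩ | h | h)
              · exact hn (Or.inr hc4)
              · exact hc1 h
              · exact hc2 h
            simp only [SimpleGraph.adjMatrix_apply, if_neg hnadj', if_pos hadj, if_neg hc1,
              if_neg hc2, if_neg hc3, if_pos hc4]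
            ring
          · have hiff : G'.Adj a b ↔ G.Adj a b := by
              rw [hG']
              constructor
              · rintro (⟨h, _⟩ | h | h)
                · exact h
                · exact absurd h hc1
                · exact absurd h hc2
              · intro h
                exact Or.inl ⟨h, by rintro (h' | h') <;> [exact hc3 h'; exact hc4 h']⟩
            simp only [SimpleGraph.adjMatrix_apply, if_neg hc1, if_neg hc2, if_neg hc3,
              if_neg hc4]
            rw [if_congr hiff rfl rfl]
            ring
  -- expand quadratic forms
  have expand : ∀ M : Matrix V V ℝ, x ⬝ᵥ M *ᵥ x = ∑ a, ∑ b, x a * (M a b * x b) := by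
    intro M
    simp [dotProduct, Matrix.mulVec, Finset.mul_sum]
  have inner1 : ∀ (c : V), ∀ a, ∑ b, (if a = c ∧ b ∈ S then x a * x b else 0)
      = if a = c then x a * σS else 0 := by
    intro c a
    by_cases h : a = c
    · subst h
      simp [Finset.sum_ite_mem, Finset.mul_sum, hσdef]
    · simp [h]
  have inner2 : ∀ (c : V), ∀ a, ∑ b, (if b = c ∧ a ∈ S then x a * x b else 0)
      = if a ∈ S then x a * x c else 0 := by
    intro c a
    by_cases h : a ∈ S
    · simp [h, Finset.sum_ite_eq']
    · simp [h]
  have T1 : ∀ (c : V), ∑ a, ∑ b, (if a = c ∧ b ∈ S then x a * x b else 0) = x c * σS := by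
    intro c
    simp_rw [inner1 c]
    simp [Finset.sum_ite_eq']
  have T2 : ∀ (c : V), ∑ a, ∑ b, (if b = c ∧ a ∈ S then x a * x b else 0) = σS * x c := by
    intro c
    simp_rw [inner2 c]
    rw [Finset.sum_ite_mem, Finset.univ_inter, hσdef, Finset.sum_mul]
  have key : x ⬝ᵥ (G'.adjMatrix ℝ) *ᵥ x
      = x ⬝ᵥ (G.adjMatrix ℝ) *ᵥ x + 2 * (x v - x u) * σS := by
    rw [expand, expand]
    simp_rw [point]
    simp_rw [sub_eq_add_neg, Finset.sum_add_distrib, Finset.sum_neg_distrib]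
    rw [T1 v, T2 v, T1 u, T2 u]
    ring
  -- Rayleigh bound for G'
  have hray := rayleigh_le hA' hρ' x
  rw [hxx, mul_one] at hray
  have h1 : ρ ≤ ρ' := by nlinarith [key, hρx, hσpos, sub_nonneg.mpr hxuv]
  by_contra hcon
  push_neg at hcon
  have hρρ' : ρ' = ρ := le_antisymm hcon h1
  have heq : x ⬝ᵥ (G'.adjMatrix ℝ) *ᵥ x = ρ' * (x ⬝ᵥ x) := by
    rw [hxx, mul_one]
    nlinarith [key, hρx, hσpos, sub_nonneg.mpr hxuv, hray]
  have heig' := rayleigh_eq hA' hρ' x heq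
  have hrow : ∀ b, (G'.adjMatrix ℝ) v b = (G.adjMatrix ℝ) v b + (if b ∈ S then 1 else 0) := by
    intro b
    by_cases hb : b ∈ S
    · have hadj' : G'.Adj v b := (hG' v b).2 (Or.inr (Or.inl ⟨rfl, hb⟩))
      have hnadj : ¬ G.Adj v b := (hS b hb).2
      simp [hadj', hnadj, hb]
    · have hiff : G'.Adj v b ↔ G.Adj v b := by
        rw [hG']
        constructor
        · rintro (⟨h, _⟩ | ⟨_, h⟩ | ⟨_, h⟩)
          · exact h
          · exact absurd h hb
          · exact absurd h hvS
        · intro h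
          refine Or.inl ⟨h, ?_⟩
          rintro (⟨hvu, _⟩ | ⟨_, hvS'⟩)
          · exact huv hvu.symm
          · exact hvS hvS'
      simp only [SimpleGraph.adjMatrix_apply, if_neg hb, add_zero]
      exact if_congr hiff rfl rfl
  have hv1 : ((G'.adjMatrix ℝ) *ᵥ x) v = ((G.adjMatrix ℝ) *ᵥ x) v + σS := by
    simp only [Matrix.mulVec, dotProduct]
    simp_rw [hrow, add_mul, ite_mul, one_mul, zero_mul]
    rw [Finset.sum_add_distrib, Finset.sum_ite_mem, Finset.univ_inter, hσdef]
  have e1 : ((G'.adjMatrix ℝ) *ᵥ x) v = ρ' * x v := by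
    rw [heig']; simp
  have e2 : ((G.adjMatrix ℝ) *ᵥ x) v = ρ * x v := by
    rw [heig]; simp
  rw [e1, e2, hρρ'] at hv1
  linarith [hσpos]
end

section
/- Let G be a connected irregular bipartite graph on n vertices with maximum degree Δ, and suppose Δ > n - Δ. Then ρ(G) ≤ ρ(K_{Δ, n-Δ}) = √(Δ(n-Δ)), with equality if and only if G is isomorphic to K_{Δ, n-Δ}. -/
open Matrix Finset

private lemma fin2_ne_iff : ∀ a b d : Fin 2, a ≠ b → (a = d ↔ ¬(b = d)) := by decide

private lemma fin2_ne_of_ne : ∀ a b d : Fin 2, a ≠ b → a ≠ d → b = d := by decide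

private lemma fin2_eq_of_ne_ne : ∀ a b d : Fin 2, a ≠ d → b ≠ d → a = b := by decide

private lemma mem_spectrum_iff_eig {V : Type*} [Fintype V] [DecidableEq V]
    (M : Matrix V V ℝ) (μ : ℝ) :
    μ ∈ spectrum ℝ M ↔ ∃ v : V → ℝ, v ≠ 0 ∧ M *ᵥ v = μ • v := by
  rw [← AlgEquiv.spectrum_eq (Matrix.toLinAlgEquiv' (R := ℝ) (n := V)),
    ← Module.End.hasEigenvalue_iff_mem_spectrum]
  constructor
  · intro h
    obtain ⟨v, hv⟩ := h.exists_hasEigenvector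
    exact ⟨v, hv.2, by simpa [Matrix.toLinAlgEquiv'_apply, Matrix.toLin'_apply]
      using hv.apply_eq_smul⟩
  · rintro ⟨v, hv0, hv⟩
    apply Module.End.hasEigenvalue_of_hasEigenvector (x := v)
    refine ⟨Module.End.mem_eigenspace_iff.2 ?_, hv0⟩
    simpa [Matrix.toLinAlgEquiv'_apply, Matrix.toLin'_apply] using hv

private lemma eig_sq_le_rowsum {V : Type*} [Fintype V] [DecidableEq V]
    (G : SimpleGraph V) [DecidableRel G.Adj] {μ : ℝ} {x : V → ℝ} (hx : x ≠ 0)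
    (heig : G.adjMatrix ℝ *ᵥ x = μ • x) {C : ℕ}
    (hC : ∀ u, ∑ k ∈ G.neighborFinset u, G.degree k ≤ C) : μ ^ 2 ≤ C := by
  have hne : (Finset.univ : Finset V).Nonempty := by
    by_contra h
    apply hx; funext v
    exact absurd (Finset.mem_univ v) (fun hv => h ⟨v, hv⟩)
  obtain ⟨i, -, hi⟩ := Finset.exists_max_image Finset.univ (fun v => |x v|) hne
  have hiM : ∀ v, |x v| ≤ |x i| := fun v => hi v (Finset.mem_univ v)
  have hMpos : 0 < |x i| := by
    rcases Function.ne_iff.1 hx with ⟨j, hj⟩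
    calc (0:ℝ) < |x j| := abs_pos.2 hj
    _ ≤ |x i| := hiM j
  have h2 : G.adjMatrix ℝ *ᵥ (G.adjMatrix ℝ *ᵥ x) = (μ^2) • x := by
    rw [heig, Matrix.mulVec_smul, heig, smul_smul]; ring_nf
  have key : (G.adjMatrix ℝ *ᵥ (G.adjMatrix ℝ *ᵥ x)) i
      = ∑ k ∈ G.neighborFinset i, ∑ j ∈ G.neighborFinset k, x j := by
    rw [SimpleGraph.adjMatrix_mulVec_apply]
    exact Finset.sum_congr rfl fun k _ => by rw [SimpleGraph.adjMatrix_mulVec_apply]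
  have habs : μ^2 * |x i| ≤ C * |x i| := by
    have h0 : μ^2 * |x i| = |(μ^2) * x i| := by
      rw [abs_mul, abs_of_nonneg (sq_nonneg μ)]
    rw [h0]
    calc |(μ^2) * x i| = |∑ k ∈ G.neighborFinset i, ∑ j ∈ G.neighborFinset k, x j| := by
          rw [← key, h2]; simp
      _ ≤ ∑ k ∈ G.neighborFinset i, ∑ j ∈ G.neighborFinset k, |x j| := by
          refine (Finset.abs_sum_le_sum_abs _ _).trans ?_
          exact Finset.sum_le_sum fun k _ => Finset.abs_sum_le_sum_abs _ _
      _ ≤ ∑ k ∈ G.neighborFinset i, (G.degree k : ℝ) * |x i| := by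
          refine Finset.sum_le_sum fun k _ => ?_
          calc ∑ j ∈ G.neighborFinset k, |x j| ≤ ∑ j ∈ G.neighborFinset k, |x i| :=
                Finset.sum_le_sum fun j _ => hiM j
            _ = (G.degree k : ℝ) * |x i| := by
                rw [Finset.sum_const, SimpleGraph.degree, nsmul_eq_mul]
      _ = ((∑ k ∈ G.neighborFinset i, G.degree k : ℕ) : ℝ) * |x i| := by
          rw [Nat.cast_sum, Finset.sum_mul]
      _ ≤ C * |x i| := by
          apply mul_le_mul_of_nonneg_right _ (abs_nonneg _)
          exact_mod_cast hC i
  exact le_of_mul_le_mul_right habs hMpos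

private lemma eig_transport {V W : Type*} [Fintype V] [DecidableEq V] [Fintype W] [DecidableEq W]
    {G : SimpleGraph V} [DecidableRel G.Adj] {H : SimpleGraph W} [DecidableRel H.Adj]
    (e : G ≃g H) (μ : ℝ) (y : W → ℝ) (hy : H.adjMatrix ℝ *ᵥ y = μ • y) :
    G.adjMatrix ℝ *ᵥ (fun v => y (e v)) = μ • (fun v => y (e v)) := by
  funext u
  rw [SimpleGraph.adjMatrix_mulVec_apply]
  have h1 : ∑ k ∈ G.neighborFinset u, y (e k) = ∑ k' ∈ H.neighborFinset (e u), y k' := by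
    apply Finset.sum_nbij' (fun k => e k) (fun k' => e.symm k')
    · intro k hk
      rw [SimpleGraph.mem_neighborFinset] at hk ⊢
      exact e.map_adj_iff.2 hk
    · intro k' hk'
      rw [SimpleGraph.mem_neighborFinset] at hk' ⊢
      have := e.symm.map_adj_iff.2 hk'
      simpa using this
    · intro k _; simp
    · intro k' _; simp
    · intro k _; rfl
  rw [h1, ← SimpleGraph.adjMatrix_mulVec_apply, hy]
  simp

private lemma kbip_eig (a b : ℕ) [DecidableRel (completeBipartiteGraph (Fin a) (Fin b)).Adj] :
    (completeBipartiteGraph (Fin a) (Fin b)).adjMatrix ℝ *ᵥ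
      (Sum.elim (fun _ : Fin a => Real.sqrt b) (fun _ : Fin b => Real.sqrt a))
    = Real.sqrt (a * b) •
      (Sum.elim (fun _ : Fin a => Real.sqrt b) (fun _ : Fin b => Real.sqrt a)) := by
  have hsq : Real.sqrt ((a:ℝ) * b) = Real.sqrt a * Real.sqrt b := by
    rw [Real.sqrt_mul (by positivity)]
  have hb : Real.sqrt b * Real.sqrt b = (b:ℝ) := Real.mul_self_sqrt (by positivity)
  have ha : Real.sqrt a * Real.sqrt a = (a:ℝ) := Real.mul_self_sqrt (by positivity)
  funext u
  rw [Matrix.mulVec]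
  cases u with
  | inl i =>
    simp only [dotProduct, SimpleGraph.adjMatrix_apply]
    simp only [dotProduct, Fintype.sum_sum_type, SimpleGraph.adjMatrix_apply,
      completeBipartiteGraph, Sum.elim_inl, Sum.elim_inr, Sum.isLeft_inl, Sum.isRight_inl,
      Sum.isLeft_inr, Sum.isRight_inr, Pi.smul_apply, smul_eq_mul, hsq]
    simp
    rw [mul_assoc, hb, mul_comm]
  | inr j =>
    simp only [dotProduct, SimpleGraph.adjMatrix_apply]
    simp only [dotProduct, Fintype.sum_sum_type, SimpleGraph.adjMatrix_apply,
      completeBipartiteGraph, Sum.elim_inl, Sum.elim_inr, Sum.isLeft_inl, Sum.isRight_inl,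
      Sum.isLeft_inr, Sum.isRight_inr, Pi.smul_apply, smul_eq_mul, hsq]
    simp
    rw [mul_comm (Real.sqrt ↑a) (Real.sqrt ↑b), mul_assoc, ha, mul_comm]

private lemma color_parity {V : Type*} {G : SimpleGraph V} (c : G.Coloring (Fin 2)) :
    ∀ {u v : V} (w : G.Walk u v), (c u = c v ↔ Even w.length) := by
  intro u v w
  induction w with
  | nil => simp
  | @cons u u' v h p ih =>
    have hne : c u ≠ c u' := c.valid h
    rw [SimpleGraph.Walk.length_cons, Nat.even_add_one, ← ih]
    exact fin2_ne_iff _ _ _ hne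

theorem stmt12 {V : Type*} [Fintype V] [DecidableEq V]
    (G : SimpleGraph V) [DecidableRel G.Adj] (hconn : G.Connected)
    (hbip : G.Colorable 2) (hirr : ¬ ∃ d, G.IsRegularOfDegree d)
    (n : ℕ) (hn : Fintype.card V = n)
    (Δ : ℕ) (hΔ : ∀ v, G.degree v ≤ Δ) (hex : ∃ v, G.degree v = Δ)
    (hbig : Δ > n - Δ)
    [DecidableRel (completeBipartiteGraph (Fin Δ) (Fin (n - Δ))).Adj]
    (ρ : ℝ) (hρ : IsGreatest (spectrum ℝ (G.adjMatrix ℝ)) ρ) :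
    ρ ≤ Real.sqrt ((Δ : ℝ) * (n - Δ : ℕ)) ∧
      (ρ = Real.sqrt ((Δ : ℝ) * (n - Δ : ℕ)) ↔
        Nonempty (G ≃g completeBipartiteGraph (Fin Δ) (Fin (n - Δ)))) := by
  obtain ⟨c⟩ := hbip
  obtain ⟨v₀, hv₀⟩ := hex
  -- basic numerology
  have hΔ1 : 1 ≤ Δ := by
    by_contra h
    push_neg at h
    interval_cases Δ
    exact hirr ⟨0, fun v => Nat.le_zero.mp (hΔ v)⟩
  have hΔn : Δ < n := by
    rw [← hv₀, ← hn]; exact G.degree_lt_card_verts v₀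
  have hnΔ1 : 1 ≤ n - Δ := by omega
  -- the color classes
  set T : Finset V := Finset.univ.filter (fun w => c w = c v₀) with hTdef
  set Q : Finset V := Finset.univ.filter (fun w => ¬ c w = c v₀) with hQdef
  have hTQ : T.card + Q.card = n := by
    rw [hTdef, hQdef, Finset.card_filter_add_card_filter_not, Finset.card_univ, hn]
  have hnbQ : ∀ u, c u = c v₀ → G.neighborFinset u ⊆ Q := by
    intro u hu
    intro k hk
    rw [SimpleGraph.mem_neighborFinset] at hk
    rw [hQdef, Finset.mem_filter]
    refine ⟨Finset.mem_univ _, ?_⟩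
    exact fun h => (c.valid hk) (hu.trans h.symm)
  have hnbT : ∀ u, ¬ c u = c v₀ → G.neighborFinset u ⊆ T := by
    intro u hu k hk
    rw [SimpleGraph.mem_neighborFinset] at hk
    rw [hTdef, Finset.mem_filter]
    exact ⟨Finset.mem_univ _, fin2_ne_of_ne _ _ _ (c.valid hk) hu⟩
  have hQΔ : Δ ≤ Q.card := by
    rw [← hv₀]
    exact Finset.card_le_card (hnbQ v₀ rfl)
  have hTa : T.card ≤ n - Δ := by omega
  have hdegT : ∀ u, ¬ c u = c v₀ → G.degree u ≤ T.card := by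
    intro u hu
    exact Finset.card_le_card (hnbT u hu)
  -- the row sum bound
  have hrow : ∀ u, ∑ k ∈ G.neighborFinset u, G.degree k ≤ Δ * (n - Δ) := by
    intro u
    by_cases hu : c u = c v₀
    · calc ∑ k ∈ G.neighborFinset u, G.degree k
          ≤ ∑ k ∈ G.neighborFinset u, (n - Δ) := by
            refine Finset.sum_le_sum fun k hk => ?_
            rw [SimpleGraph.mem_neighborFinset] at hk
            have hk' : ¬ c k = c v₀ := fun h => (c.valid hk) (hu.trans h.symm)
            exact (hdegT k hk').trans hTa
      _ = G.degree u * (n - Δ) := by rw [Finset.sum_const, SimpleGraph.degree, smul_eq_mul]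
      _ ≤ Δ * (n - Δ) := Nat.mul_le_mul_right _ (hΔ u)
    · calc ∑ k ∈ G.neighborFinset u, G.degree k
          ≤ ∑ k ∈ G.neighborFinset u, Δ := Finset.sum_le_sum fun k _ => hΔ k
      _ = G.degree u * Δ := by rw [Finset.sum_const, SimpleGraph.degree, smul_eq_mul]
      _ ≤ (n - Δ) * Δ := Nat.mul_le_mul_right _ ((hdegT u hu).trans hTa)
      _ = Δ * (n - Δ) := Nat.mul_comm _ _
  -- Part 1: the bound
  have hspec := hρ.1
  rw [mem_spectrum_iff_eig] at hspec
  obtain ⟨x, hx0, hxeig⟩ := hspec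
  have hρsq : ρ ^ 2 ≤ ((Δ * (n - Δ) : ℕ) : ℝ) := eig_sq_le_rowsum G hx0 hxeig hrow
  have hcast : ((Δ * (n - Δ) : ℕ) : ℝ) = (Δ : ℝ) * ((n - Δ : ℕ) : ℝ) := by push_cast; ring
  have hbound : ρ ≤ Real.sqrt ((Δ : ℝ) * ((n - Δ : ℕ) : ℝ)) := by
    calc ρ ≤ |ρ| := le_abs_self ρ
      _ = Real.sqrt (ρ ^ 2) := (Real.sqrt_sq_eq_abs ρ).symm
      _ ≤ Real.sqrt ((Δ : ℝ) * ((n - Δ : ℕ) : ℝ)) :=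
          Real.sqrt_le_sqrt (by rw [← hcast]; exact hρsq)
  refine ⟨hbound, ?_, ?_⟩
  · -- equality implies isomorphism
    intro heq
    have h1Δ : (1:ℝ) ≤ (Δ:ℝ) := by exact_mod_cast hΔ1
    have h1nΔ : (1:ℝ) ≤ ((n - Δ : ℕ):ℝ) := by exact_mod_cast hnΔ1
    have habpos : (0:ℝ) < (Δ:ℝ) * ((n - Δ : ℕ):ℝ) := by nlinarith
    have hρ2 : ρ ^ 2 = ((Δ * (n - Δ) : ℕ) : ℝ) := by
      rw [heq, Real.sq_sqrt habpos.le, hcast]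
    obtain ⟨j0, hj0⟩ := Function.ne_iff.1 hx0
    obtain ⟨i, -, hi⟩ := Finset.exists_max_image Finset.univ (fun v => |x v|)
      ⟨v₀, Finset.mem_univ _⟩
    have hiM : ∀ v, |x v| ≤ |x i| := fun v => hi v (Finset.mem_univ v)
    have hMpos : 0 < |x i| := lt_of_lt_of_le (abs_pos.2 hj0) (hiM j0)
    -- Claim A : rigidity at a maximal vertex
    have claimA : ∀ u, |x u| = |x i| →
        ((∑ k ∈ G.neighborFinset u, G.degree k) = Δ * (n - Δ) ∧
          ∀ k ∈ G.neighborFinset u, ∀ j ∈ G.neighborFinset k, |x j| = |x i|) := by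
      intro u hu
      have h2 : (G.adjMatrix ℝ *ᵥ (G.adjMatrix ℝ *ᵥ x)) u = ρ^2 * x u := by
        rw [hxeig, Matrix.mulVec_smul, hxeig, smul_smul, Pi.smul_apply, smul_eq_mul, sq]
      have key : (G.adjMatrix ℝ *ᵥ (G.adjMatrix ℝ *ᵥ x)) u
          = ∑ k ∈ G.neighborFinset u, ∑ j ∈ G.neighborFinset k, x j := by
        rw [SimpleGraph.adjMatrix_mulVec_apply]
        exact Finset.sum_congr rfl fun k _ => by rw [SimpleGraph.adjMatrix_mulVec_apply]
      have step1 : ((Δ * (n - Δ) : ℕ) : ℝ) * |x i|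
          ≤ ∑ k ∈ G.neighborFinset u, ∑ j ∈ G.neighborFinset k, |x j| := by
        calc ((Δ * (n - Δ) : ℕ) : ℝ) * |x i| = |ρ^2 * x u| := by
              rw [abs_mul, abs_of_nonneg (sq_nonneg ρ), hρ2, hu]
          _ = |∑ k ∈ G.neighborFinset u, ∑ j ∈ G.neighborFinset k, x j| := by
              rw [← h2, key]
          _ ≤ _ := (Finset.abs_sum_le_sum_abs _ _).trans
              (Finset.sum_le_sum fun k _ => Finset.abs_sum_le_sum_abs _ _)
      have step2 : ∀ k ∈ G.neighborFinset u,
          ∑ j ∈ G.neighborFinset k, |x j| ≤ (G.degree k : ℝ) * |x i| := by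
        intro k _
        calc ∑ j ∈ G.neighborFinset k, |x j| ≤ ∑ j ∈ G.neighborFinset k, |x i| :=
              Finset.sum_le_sum fun j _ => hiM j
          _ = (G.degree k : ℝ) * |x i| := by
              rw [Finset.sum_const, SimpleGraph.degree, nsmul_eq_mul]
      have step3 : ∑ k ∈ G.neighborFinset u, (G.degree k : ℝ) * |x i|
          ≤ ((Δ * (n - Δ) : ℕ) : ℝ) * |x i| := by
        rw [← Finset.sum_mul]
        apply mul_le_mul_of_nonneg_right _ (abs_nonneg _)
        rw [← Nat.cast_sum]
        exact_mod_cast hrow u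
      have hS12 : ∑ k ∈ G.neighborFinset u, ∑ j ∈ G.neighborFinset k, |x j|
          ≤ ∑ k ∈ G.neighborFinset u, (G.degree k : ℝ) * |x i| := Finset.sum_le_sum step2
      have hS1eq : ∑ k ∈ G.neighborFinset u, ∑ j ∈ G.neighborFinset k, |x j|
          = ∑ k ∈ G.neighborFinset u, (G.degree k : ℝ) * |x i| := by linarith
      have hS2eq : ∑ k ∈ G.neighborFinset u, (G.degree k : ℝ) * |x i|
          = ((Δ * (n - Δ) : ℕ) : ℝ) * |x i| := by linarith
      constructor
      · have : ((∑ k ∈ G.neighborFinset u, G.degree k : ℕ) : ℝ) = ((Δ * (n - Δ) : ℕ) : ℝ) := by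
          have := hS2eq
          rw [← Finset.sum_mul, ← Nat.cast_sum] at this
          exact mul_right_cancel₀ (ne_of_gt hMpos) this
        exact_mod_cast this
      · intro k hk j hj
        have hkeq : ∑ j ∈ G.neighborFinset k, |x j| = (G.degree k : ℝ) * |x i| :=
          (Finset.sum_eq_sum_iff_of_le step2).1 hS1eq k hk
        have hconst : ∑ j ∈ G.neighborFinset k, |x j| = ∑ j ∈ G.neighborFinset k, |x i| := by
          rw [hkeq, Finset.sum_const, SimpleGraph.degree, nsmul_eq_mul]
        exact (Finset.sum_eq_sum_iff_of_le (fun j _ => hiM j)).1 hconst j hj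
    -- propagation along even walks
    have prop : ∀ L, ∀ u v : V, ∀ w : G.Walk u v, w.length = L → Even L →
        |x u| = |x i| → |x v| = |x i| := by
      intro L
      induction L using Nat.strong_induction_on with
      | _ L ih =>
        intro u v w hL hE hu
        cases w with
        | nil => exact hu
        | @cons _ k _ hadj w' =>
          cases w' with
          | nil =>
            exfalso
            rw [SimpleGraph.Walk.length_cons, SimpleGraph.Walk.length_nil] at hL
            rcases hE with ⟨t, ht⟩
            omega
          | @cons _ m _ hadj2 w'' =>
            have hk : |x m| = |x i| :=
              (claimA u hu).2 k (by rw [SimpleGraph.mem_neighborFinset]; exact hadj) m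
                (by rw [SimpleGraph.mem_neighborFinset]; exact hadj2)
            simp only [SimpleGraph.Walk.length_cons] at hL
            rcases hE with ⟨t, ht⟩
            refine ih w''.length (by omega) m v w'' rfl ⟨t - 1, by omega⟩ hk
    have hclassrow : ∀ v, c v = c i →
        ((∑ k ∈ G.neighborFinset v, G.degree k) = Δ * (n - Δ) ∧
          ∀ k ∈ G.neighborFinset v, ∀ j ∈ G.neighborFinset k, |x j| = |x i|) := by
      intro v hv
      obtain ⟨w⟩ := hconn.preconnected i v
      exact claimA v (prop w.length i v w rfl ((color_parity c w).1 hv.symm) rfl)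
    -- structure: T.card = n - Δ and adjacency is exactly "different colors"
    have main : T.card = n - Δ ∧ (∀ u v, G.Adj u v ↔ c u ≠ c v) := by
      by_cases hci : c i = c v₀
      · have hkey : ∀ u, c u = c v₀ → G.degree u = Δ ∧ T.card = n - Δ := by
          intro u hu
          have hrowu : (∑ k ∈ G.neighborFinset u, G.degree k) = Δ * (n - Δ) :=
            (hclassrow u (hu.trans hci.symm)).1
          have h1 : Δ * (n - Δ) ≤ G.degree u * T.card := by
            rw [← hrowu]
            calc ∑ k ∈ G.neighborFinset u, G.degree k
                ≤ ∑ k ∈ G.neighborFinset u, T.card := by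
                  refine Finset.sum_le_sum fun k hk => ?_
                  rw [SimpleGraph.mem_neighborFinset] at hk
                  exact hdegT k (fun h => (c.valid hk) (hu.trans h.symm))
              _ = G.degree u * T.card := by rw [Finset.sum_const, smul_eq_mul]; rfl
          have h2 : G.degree u * T.card ≤ Δ * T.card := Nat.mul_le_mul_right _ (hΔ u)
          have h3 : Δ * T.card ≤ Δ * (n - Δ) := Nat.mul_le_mul_left _ hTa
          have e1 : Δ * T.card = Δ * (n - Δ) := le_antisymm h3 (h1.trans h2)
          have hT' : T.card = n - Δ := Nat.eq_of_mul_eq_mul_left (by omega) e1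
          have e2 : G.degree u * T.card = Δ * T.card := le_antisymm h2 (by rw [e1]; exact h1)
          have hdu : G.degree u = Δ := Nat.eq_of_mul_eq_mul_right (by omega) e2
          exact ⟨hdu, hT'⟩
        have hT' : T.card = n - Δ := (hkey v₀ rfl).2
        have hQ' : Q.card = Δ := by omega
        have hNeq : ∀ u, c u = c v₀ → G.neighborFinset u = Q := by
          intro u hu
          apply Finset.eq_of_subset_of_card_le (hnbQ u hu)
          rw [SimpleGraph.card_neighborFinset_eq_degree, (hkey u hu).1, hQ']
        refine ⟨hT', fun u v => ⟨fun h => c.valid h, fun hne => ?_⟩⟩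
        by_cases h : c u = c v₀
        · have hv : ¬ c v = c v₀ := fun h2 => hne (h.trans h2.symm)
          have hmem : v ∈ G.neighborFinset u := by
            rw [hNeq u h, hQdef, Finset.mem_filter]
            exact ⟨Finset.mem_univ _, hv⟩
          rw [SimpleGraph.mem_neighborFinset] at hmem; exact hmem
        · have hv : c v = c v₀ := fin2_ne_of_ne _ _ _ hne h
          have hmem : u ∈ G.neighborFinset v := by
            rw [hNeq v hv, hQdef, Finset.mem_filter]
            exact ⟨Finset.mem_univ _, h⟩
          rw [SimpleGraph.mem_neighborFinset] at hmem; exact hmem.symm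
      · have hkey : ∀ u, ¬ c u = c v₀ → G.degree u = T.card ∧ T.card = n - Δ := by
          intro u hu
          have hrowu : (∑ k ∈ G.neighborFinset u, G.degree k) = Δ * (n - Δ) :=
            (hclassrow u (fin2_eq_of_ne_ne _ _ _ hu hci)).1
          have h1 : Δ * (n - Δ) ≤ G.degree u * Δ := by
            rw [← hrowu]
            calc ∑ k ∈ G.neighborFinset u, G.degree k
                ≤ ∑ k ∈ G.neighborFinset u, Δ := Finset.sum_le_sum fun k _ => hΔ k
              _ = G.degree u * Δ := by rw [Finset.sum_const, smul_eq_mul]; rfl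
          have h2 : G.degree u * Δ ≤ T.card * Δ := Nat.mul_le_mul_right _ (hdegT u hu)
          have h3 : T.card * Δ ≤ (n - Δ) * Δ := Nat.mul_le_mul_right _ hTa
          have e1 : T.card * Δ = (n - Δ) * Δ := by
            apply le_antisymm h3
            calc (n - Δ) * Δ = Δ * (n - Δ) := Nat.mul_comm _ _
              _ ≤ G.degree u * Δ := h1
              _ ≤ T.card * Δ := h2
          have hT' : T.card = n - Δ := Nat.eq_of_mul_eq_mul_right (by omega) e1
          have e2 : G.degree u * Δ = T.card * Δ := by
            apply le_antisymm h2
            calc T.card * Δ = (n - Δ) * Δ := e1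
              _ = Δ * (n - Δ) := Nat.mul_comm _ _
              _ ≤ G.degree u * Δ := h1
          have hdu : G.degree u = T.card := Nat.eq_of_mul_eq_mul_right (by omega) e2
          exact ⟨hdu, hT'⟩
        have hT' : T.card = n - Δ := (hkey i hci).2
        have hNeq : ∀ u, ¬ c u = c v₀ → G.neighborFinset u = T := by
          intro u hu
          apply Finset.eq_of_subset_of_card_le (hnbT u hu)
          rw [SimpleGraph.card_neighborFinset_eq_degree, (hkey u hu).1]
        refine ⟨hT', fun u v => ⟨fun h => c.valid h, fun hne => ?_⟩⟩
        by_cases h : c u = c v₀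
        · have hv : ¬ c v = c v₀ := fun h2 => hne (h.trans h2.symm)
          have hmem : u ∈ G.neighborFinset v := by
            rw [hNeq v hv, hTdef, Finset.mem_filter]
            exact ⟨Finset.mem_univ _, h⟩
          rw [SimpleGraph.mem_neighborFinset] at hmem; exact hmem.symm
        · have hmem : v ∈ G.neighborFinset u := by
            rw [hNeq u h, hTdef, Finset.mem_filter]
            exact ⟨Finset.mem_univ _, fin2_ne_of_ne _ _ _ hne h⟩
          rw [SimpleGraph.mem_neighborFinset] at hmem; exact hmem
    obtain ⟨hTcard, hadjiff⟩ := main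
    have hQcard : Q.card = Δ := by omega
    have hcT : Fintype.card {v // c v = c v₀} = n - Δ := by
      rw [Fintype.card_subtype]; exact hTcard
    have hcQ : Fintype.card {v // ¬ c v = c v₀} = Δ := by
      rw [Fintype.card_subtype]; exact hQcard
    let e1 : {v // ¬ c v = c v₀} ≃ Fin Δ := Fintype.equivFinOfCardEq hcQ
    let e2 : {v // c v = c v₀} ≃ Fin (n - Δ) := Fintype.equivFinOfCardEq hcT
    let f : V ≃ (Fin Δ ⊕ Fin (n - Δ)) :=
      { toFun := fun v => if h : c v = c v₀ then Sum.inr (e2 ⟨v, h⟩) else Sum.inl (e1 ⟨v, h⟩)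
        invFun := Sum.elim (fun i => (e1.symm i).1) (fun j => (e2.symm j).1)
        left_inv := by
          intro v
          by_cases h : c v = c v₀
          · simp only [dif_pos h, Sum.elim_inr, Equiv.symm_apply_apply]
          · simp only [dif_neg h, Sum.elim_inl, Equiv.symm_apply_apply]
        right_inv := by
          rintro (i | j)
          · have h := (e1.symm i).2
            simp only [Sum.elim_inl, dif_neg h, Subtype.coe_eta, Equiv.apply_symm_apply]
          · have h := (e2.symm j).2
            simp only [Sum.elim_inr, dif_pos h, Subtype.coe_eta, Equiv.apply_symm_apply] }
    refine ⟨⟨f, @fun u v => ?_⟩⟩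
    show (completeBipartiteGraph _ _).Adj (f u) (f v) ↔ G.Adj u v
    rw [hadjiff u v]
    show (completeBipartiteGraph _ _).Adj
      (if h : c u = c v₀ then Sum.inr (e2 ⟨u, h⟩) else Sum.inl (e1 ⟨u, h⟩))
      (if h : c v = c v₀ then Sum.inr (e2 ⟨v, h⟩) else Sum.inl (e1 ⟨v, h⟩)) ↔ c u ≠ c v
    by_cases h1 : c u = c v₀ <;> by_cases h2 : c v = c v₀
    · rw [dif_pos h1, dif_pos h2]
      simp only [completeBipartiteGraph, Sum.isLeft_inr, Sum.isRight_inr]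
      simp [h1.trans h2.symm]
    · rw [dif_pos h1, dif_neg h2]
      simp only [completeBipartiteGraph, Sum.isLeft_inr, Sum.isRight_inl, Sum.isRight_inr,
        Sum.isLeft_inl]
      simp only [and_true, true_and, or_false, false_and, false_or]
      constructor
      · intro _ hcc
        exact h2 (hcc ▸ h1)
      · intro _; simp
    · rw [dif_neg h1, dif_pos h2]
      simp only [completeBipartiteGraph, Sum.isLeft_inl, Sum.isRight_inr, Sum.isLeft_inr,
        Sum.isRight_inl]
      simp only [and_true, true_and, or_false, false_and, false_or]
      constructor
      · intro _ hcc
        exact h1 (hcc.symm ▸ h2)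
      · intro _; simp
    · rw [dif_neg h1, dif_neg h2]
      simp only [completeBipartiteGraph, Sum.isLeft_inl, Sum.isRight_inl]
      simp [fin2_eq_of_ne_ne _ _ _ h1 h2]
  · -- isomorphism implies equality
    rintro ⟨e⟩
    have hy := kbip_eig Δ (n - Δ)
    have hx' := eig_transport e _ _ hy
    have hmem : Real.sqrt ((Δ:ℝ) * ((n - Δ : ℕ):ℝ)) ∈ spectrum ℝ (G.adjMatrix ℝ) := by
      rw [mem_spectrum_iff_eig]
      refine ⟨_, ?_, hx'⟩
      intro h0
      have h1 := congrFun h0 (e.symm (Sum.inl ⟨0, hΔ1⟩))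
      simp only [Pi.zero_apply] at h1
      rw [RelIso.apply_symm_apply] at h1
      simp only [Sum.elim_inl] at h1
      have h2 : (0:ℝ) < Real.sqrt ((n - Δ : ℕ):ℝ) :=
        Real.sqrt_pos.2 (by exact_mod_cast hnΔ1)
      rw [h1] at h2
      exact lt_irrefl _ h2
    exact le_antisymm hbound (hρ.2 hmem)
end
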